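/- Path estimate for long exchanges: for every β ≥ 0, every positive integer N divisible by 3, all integers 1 ≤ x < y ≤ N, and every function f : Ω_N → ℝ, ν_N^β( (∇_{x,y} f)² ) ≤ 2 (2(y−x) − 1) e^{2β} Σ_{z=x}^{y−1} ν_N^β( (∇_{z,z+1} f)² ). -/

import Mathlib

open Finset Filter Topology MeasureTheory
open scoped BigOperators

attribute [local instance] Classical.propDecidable

namespace ABC

/-- Occupation indicator. Labels: `0 = A`, `1 = B`, `2 = C`. -/
def eta {N : ℕ} (ζ : Fin N → Fin 3) (α : Fin 3) (x : Fin N) : ℝ :=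
  if ζ x = α then 1 else 0

/-- The equal-density constraint defining `Ω_N`. -/
def inOmega {N : ℕ} (ζ : Fin N → Fin 3) : Prop :=
  ∀ α : Fin 3, 3 * (Finset.univ.filter (fun x => ζ x = α)).card = N

/-- The configuration space `Ω_N` as a finite set. -/
noncomputable def OmegaF (N : ℕ) : Finset (Fin N → Fin 3) :=
  Finset.univ.filter (fun ζ => inOmega ζ)

/-- The mean-field Hamiltonian `H_N`. -/
noncomputable def HN {N : ℕ} (ζ : Fin N → Fin 3) : ℝ :=
  (1 / (N : ℝ) ^ 2) *
    ∑ x : Fin N, ∑ y : Fin N,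
      if (x : ℕ) < (y : ℕ) then
        eta ζ 0 x * eta ζ 2 y + eta ζ 1 x * eta ζ 0 y + eta ζ 2 x * eta ζ 1 y
      else 0

/-- The partition function `Z_N^β`. -/
noncomputable def Zpart (N : ℕ) (β : ℝ) : ℝ :=
  ∑ ζ ∈ OmegaF N, Real.exp (-(β * N * HN ζ))

/-- The Gibbs measure `ν_N^β`. -/
noncomputable def nu (N : ℕ) (β : ℝ) (ζ : Fin N → Fin 3) : ℝ :=
  Real.exp (-(β * N * HN ζ)) / Zpart N β

/-- Expectation with respect to `ν_N^β`. -/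
noncomputable def expect (N : ℕ) (β : ℝ) (f : (Fin N → Fin 3) → ℝ) : ℝ :=
  ∑ ζ ∈ OmegaF N, nu N β ζ * f ζ

/-- Variance with respect to `ν_N^β`. -/
noncomputable def varNu (N : ℕ) (β : ℝ) (f : (Fin N → Fin 3) → ℝ) : ℝ :=
  expect N β (fun ζ => (f ζ - expect N β f) ^ 2)

/-- The configuration `ζ^{x,y}` obtained by exchanging the values at `x` and `y`. -/
def exch {N : ℕ} (ζ : Fin N → Fin 3) (x y : Fin N) : Fin N → Fin 3 :=
  fun z => if z = x then ζ y else if z = y then ζ x else ζ z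

/-- The gradient `∇_{x,y} f`. -/
def grad {N : ℕ} (f : (Fin N → Fin 3) → ℝ) (x y : Fin N) (ζ : Fin N → Fin 3) : ℝ :=
  f (exch ζ x y) - f ζ

/-- Cyclic successor `x + 1` in `Z_N`. -/
def fsucc {N : ℕ} (x : Fin N) : Fin N := ⟨(x.val + 1) % N, Nat.mod_lt _ x.pos⟩

/-- Nearest-neighbour jump rates `c_x^{β,N}`. -/
noncomputable def cnn {N : ℕ} (β : ℝ) (x : Fin N) (ζ : Fin N → Fin 3) : ℝ :=
  if (ζ x = 0 ∧ ζ (fsucc x) = 2) ∨ (ζ x = 2 ∧ ζ (fsucc x) = 1) ∨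
      (ζ x = 1 ∧ ζ (fsucc x) = 0) then
    Real.exp (-(β / (2 * N)))
  else Real.exp (β / (2 * N))

/-- Dirichlet form `D_N^β` of the ABC generator. -/
noncomputable def Dnn (N : ℕ) (β : ℝ) (f : (Fin N → Fin 3) → ℝ) : ℝ :=
  (1 / 2) * ∑ x : Fin N, expect N β (fun ζ => cnn β x ζ * (grad f x (fsucc x) ζ) ^ 2)

/-- The site of `Z_N` corresponding to the integer `z` (taken modulo `N`). -/
def site {N : ℕ} (hN : 0 < N) (z : ℕ) : Fin N := ⟨z % N, Nat.mod_lt _ hN⟩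

/- ############ new stuff ############ -/

noncomputable def Aval (p q : Fin 3) : ℝ :=
  (if p = 0 then (1:ℝ) else 0) * (if q = 2 then (1:ℝ) else 0) +
  (if p = 1 then (1:ℝ) else 0) * (if q = 0 then (1:ℝ) else 0) +
  (if p = 2 then (1:ℝ) else 0) * (if q = 1 then (1:ℝ) else 0)

noncomputable def Ssum {N : ℕ} (ζ : Fin N → Fin 3) : ℝ :=
  ∑ x : Fin N, ∑ y : Fin N, if (x : ℕ) < (y : ℕ) then Aval (ζ x) (ζ y) else 0

lemma HN_eq {N : ℕ} (ζ : Fin N → Fin 3) : HN ζ = (1 / (N : ℝ) ^ 2) * Ssum ζ := rfl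

section ExchLemmas
variable {N : ℕ}

lemma exch_apply_left (ζ : Fin N → Fin 3) (u v : Fin N) : exch ζ u v u = ζ v := by
  simp [exch]

lemma exch_apply_right (ζ : Fin N → Fin 3) (u v : Fin N) : exch ζ u v v = ζ u := by
  by_cases h : v = u <;> simp [exch, h]

lemma exch_apply_other (ζ : Fin N → Fin 3) (u v w : Fin N) (h1 : w ≠ u) (h2 : w ≠ v) :
    exch ζ u v w = ζ w := by
  simp [exch, h1, h2]

lemma exch_exch (ζ : Fin N → Fin 3) (u v : Fin N) : exch (exch ζ u v) u v = ζ := by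
  funext w
  by_cases h1 : w = u <;> by_cases h2 : w = v <;> simp_all [exch]

lemma exch_comm (ζ : Fin N → Fin 3) (u v : Fin N) : exch ζ u v = exch ζ v u := by
  funext w
  by_cases h1 : w = u <;> by_cases h2 : w = v <;> simp_all [exch]

lemma inOmega_exch {ζ : Fin N → Fin 3} (h : inOmega ζ) (u v : Fin N) :
    inOmega (exch ζ u v) := by
  intro α
  have hcard : (Finset.univ.filter (fun x => exch ζ u v x = α)).card
      = (Finset.univ.filter (fun x => ζ x = α)).card := by
    apply Finset.card_equiv (Equiv.swap u v)
    intro w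
    simp only [Finset.mem_filter, Finset.mem_univ, true_and]
    constructor
    · intro hw
      by_cases h1 : w = u <;> by_cases h2 : w = v <;>
        simp_all [exch, Equiv.swap_apply_def]
    · intro hw
      by_cases h1 : w = u <;> by_cases h2 : w = v <;>
        simp_all [exch, Equiv.swap_apply_def]
  rw [hcard, h α]

end ExchLemmas

section Swap
variable {N : ℕ}

lemma Ssum_swap (ζ : Fin N → Fin 3) (u v : Fin N) (huv : (u : ℕ) < (v : ℕ)) :
    Ssum (exch ζ u v) - Ssum ζ =
      (Aval (ζ v) (ζ u) - Aval (ζ u) (ζ v)) +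
      ∑ w ∈ Finset.univ.filter (fun w : Fin N => (u : ℕ) < (w : ℕ) ∧ (w : ℕ) < (v : ℕ)),
        (Aval (ζ v) (ζ w) + Aval (ζ w) (ζ u) - Aval (ζ u) (ζ w) - Aval (ζ w) (ζ v)) := by
  have hne : u ≠ v := Fin.ne_of_val_ne (Nat.ne_of_lt huv)
  set ζ' := exch ζ u v with hζ'
  have hu' : ζ' u = ζ v := exch_apply_left ζ u v
  have hv' : ζ' v = ζ u := exch_apply_right ζ u v
  have ho' : ∀ w, w ≠ u → w ≠ v → ζ' w = ζ w := fun w h1 h2 => exch_apply_other ζ u v w h1 h2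
  set D : Fin N → Fin N → ℝ := fun a b =>
    (if (a : ℕ) < (b : ℕ) then Aval (ζ' a) (ζ' b) else 0) -
    (if (a : ℕ) < (b : ℕ) then Aval (ζ a) (ζ b) else 0) with hD
  have hsum : Ssum ζ' - Ssum ζ = ∑ a : Fin N, ∑ b : Fin N, D a b := by
    rw [Ssum, Ssum, ← Finset.sum_sub_distrib]
    exact Finset.sum_congr rfl fun a _ => (Finset.sum_sub_distrib _ _).symm
  have split : ∀ F : Fin N → ℝ,
      (∑ a : Fin N, F a) = F u + F v + ∑ a ∈ Finset.univ \ {u, v}, F a := by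
    intro F
    rw [← Finset.sum_sdiff (Finset.subset_univ ({u, v} : Finset (Fin N))),
      Finset.sum_pair hne]
    ring
  have hD0 : ∀ a b, a ≠ u → a ≠ v → b ≠ u → b ≠ v → D a b = 0 := by
    intro a b h1 h2 h3 h4
    simp [hD, ho' a h1 h2, ho' b h3 h4]
  have hmem : ∀ w : Fin N, w ∈ Finset.univ \ ({u, v} : Finset (Fin N)) ↔ (w ≠ u ∧ w ≠ v) := by
    intro w; simp [Finset.mem_sdiff]
  have hinner : ∀ a ∈ Finset.univ \ ({u, v} : Finset (Fin N)),
      (∑ b : Fin N, D a b) = D a u + D a v := by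
    intro a ha
    rw [hmem] at ha
    rw [show (∑ b : Fin N, D a b) = ∑ b ∈ ({u, v} : Finset (Fin N)), D a b from ?_,
      Finset.sum_pair hne]
    symm
    apply Finset.sum_subset (Finset.subset_univ _)
    intro b _ hb
    simp only [Finset.mem_insert, Finset.mem_singleton, not_or] at hb
    exact hD0 a b ha.1 ha.2 hb.1 hb.2
  rw [hsum, split (fun a => ∑ b : Fin N, D a b)]
  rw [Finset.sum_congr rfl hinner]
  rw [split (fun b => D u b), split (fun b => D v b)]
  have duu : D u u = 0 := by
    simp only [hD]; split_ifs <;> first | (exfalso; omega) | ring1 | norm_num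
  have dvv : D v v = 0 := by
    simp only [hD]; split_ifs <;> first | (exfalso; omega) | ring1 | norm_num
  have dvu : D v u = 0 := by
    simp only [hD]; split_ifs <;> first | (exfalso; omega) | ring1 | norm_num
  have duv : D u v = Aval (ζ v) (ζ u) - Aval (ζ u) (ζ v) := by
    simp only [hD, hu', hv']; split_ifs <;> first | (exfalso; omega) | ring1 | norm_num
  rw [duu, dvv, dvu, duv]
  have hcomb : (∑ a ∈ Finset.univ \ ({u, v} : Finset (Fin N)), D u a)
      + (∑ a ∈ Finset.univ \ ({u, v} : Finset (Fin N)), D v a)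
      + (∑ a ∈ Finset.univ \ ({u, v} : Finset (Fin N)), (D a u + D a v))
      = ∑ w ∈ Finset.univ.filter (fun w : Fin N => (u : ℕ) < (w : ℕ) ∧ (w : ℕ) < (v : ℕ)),
        (Aval (ζ v) (ζ w) + Aval (ζ w) (ζ u) - Aval (ζ u) (ζ w) - Aval (ζ w) (ζ v)) := by
    rw [← Finset.sum_add_distrib, ← Finset.sum_add_distrib]
    have hsub : Finset.univ.filter (fun w : Fin N => (u : ℕ) < (w : ℕ) ∧ (w : ℕ) < (v : ℕ))
        ⊆ Finset.univ \ ({u, v} : Finset (Fin N)) := by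
      intro w hw
      simp only [Finset.mem_filter] at hw
      rw [hmem]
      exact ⟨Fin.ne_of_val_ne (Nat.ne_of_gt hw.2.1), Fin.ne_of_val_ne (Nat.ne_of_lt hw.2.2)⟩
    rw [← Finset.sum_subset hsub ?zero]
    case zero =>
      intro w hwT hwF
      rw [hmem] at hwT
      simp only [Finset.mem_filter, Finset.mem_univ, true_and, not_and, not_lt] at hwF
      have hwu : (w : ℕ) ≠ (u : ℕ) := fun h => hwT.1 (Fin.ext h)
      have hwv : (w : ℕ) ≠ (v : ℕ) := fun h => hwT.2 (Fin.ext h)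
      have hζw : ζ' w = ζ w := ho' w hwT.1 hwT.2
      rcases Nat.lt_or_ge (w : ℕ) (u : ℕ) with hlt | hge
      · have h1 : ¬ ((u : ℕ) < (w : ℕ)) := by omega
        have h2 : ¬ ((v : ℕ) < (w : ℕ)) := by omega
        simp only [hD, hζw, hu', hv']
        split_ifs <;> first | (exfalso; omega) | ring1 | norm_num
      · have h3 : (u : ℕ) < (w : ℕ) := by omega
        have h5 : (v : ℕ) ≤ (w : ℕ) := by
          rcases Nat.lt_or_ge (w : ℕ) (v : ℕ) with h | h
          · exact absurd h (by intro hh; exact absurd (hwF h3) (by omega))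
          · exact h
        have h4 : (v : ℕ) < (w : ℕ) := by omega
        simp only [hD, hζw, hu', hv']
        split_ifs <;> first | (exfalso; omega) | ring1 | norm_num
    · apply Finset.sum_congr rfl
      intro w hw
      simp only [Finset.mem_filter, Finset.mem_univ, true_and] at hw
      have hwu : w ≠ u := Fin.ne_of_val_ne (Nat.ne_of_gt hw.1)
      have hwv : w ≠ v := Fin.ne_of_val_ne (Nat.ne_of_lt hw.2)
      have hζw : ζ' w = ζ w := ho' w hwu hwv
      have hw1 := hw.1
      have hw2 := hw.2
      simp only [hD, hζw, hu', hv']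
      split_ifs <;> first | (exfalso; omega) | ring1 | norm_num
  linarith [hcomb]

end Swap

section Bounds
variable {N : ℕ}

lemma Aval_diff_abs (p q : Fin 3) : |Aval q p - Aval p q| ≤ 1 := by
  fin_cases p <;> fin_cases q <;> norm_num [Aval, Fin.ext_iff]

lemma Ssum_adj (ζ : Fin N → Fin 3) (u v : Fin N) (h : (u : ℕ) + 1 = (v : ℕ)) :
    |Ssum (exch ζ u v) - Ssum ζ| ≤ 1 := by
  rw [Ssum_swap ζ u v (by omega)]
  have he : Finset.univ.filter (fun w : Fin N => (u : ℕ) < (w : ℕ) ∧ (w : ℕ) < (v : ℕ))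
      = ∅ := by
    apply Finset.filter_eq_empty_iff.mpr
    intro w _
    omega
  rw [he, Finset.sum_empty, add_zero]
  exact Aval_diff_abs (ζ u) (ζ v)

lemma filter_sdiff_card (ζ : Fin N → Fin 3) (u v : Fin N) (huv : u ≠ v) (q : Fin 3) :
    (((Finset.univ \ ({u, v} : Finset (Fin N))).filter (fun w => ζ w = q)).card : ℝ)
      = ((Finset.univ.filter (fun w => ζ w = q)).card : ℝ)
        - (if ζ u = q then 1 else 0) - (if ζ v = q then 1 else 0) := by
  have hun : (Finset.univ \ ({u, v} : Finset (Fin N))) ∪ {u, v} = Finset.univ :=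
    Finset.sdiff_union_of_subset (Finset.subset_univ _)
  have hdisj : Disjoint (Finset.univ \ ({u, v} : Finset (Fin N))) ({u, v} : Finset (Fin N)) :=
    Finset.sdiff_disjoint
  have h1 : (Finset.univ.filter (fun w => ζ w = q)).card
      = ((Finset.univ \ ({u, v} : Finset (Fin N))).filter (fun w => ζ w = q)).card
        + (({u, v} : Finset (Fin N)).filter (fun w => ζ w = q)).card := by
    rw [← Finset.card_union_of_disjoint (Finset.disjoint_filter_filter hdisj),
      ← Finset.filter_union, hun]
  have h2 : ((({u, v} : Finset (Fin N)).filter (fun w => ζ w = q)).card : ℝ)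
      = (if ζ u = q then 1 else 0) + (if ζ v = q then 1 else 0) := by
    rw [Finset.filter_insert, Finset.filter_singleton]
    by_cases hu : ζ u = q <;> by_cases hv : ζ v = q <;>
      simp [hu, hv, huv, Finset.card_insert_of_notMem] <;> norm_num
  have h3 := congrArg (Nat.cast : ℕ → ℝ) h1
  push_cast at h3
  linarith [h2, h3]

lemma Aval_left_ind (p q : Fin 3) : Aval p q = if q = p + 2 then (1:ℝ) else 0 := by
  fin_cases p <;> fin_cases q <;> norm_num [Aval, Fin.ext_iff, Fin.add_def]

lemma Aval_right_ind (p q : Fin 3) : Aval q p = if q = p + 1 then (1:ℝ) else 0 := by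
  fin_cases p <;> fin_cases q <;> norm_num [Aval, Fin.ext_iff, Fin.add_def]

lemma sum_Aval_left (ζ : Fin N → Fin 3) (T : Finset (Fin N)) (p : Fin 3) :
    (∑ w ∈ T, Aval p (ζ w)) = ((T.filter (fun w => ζ w = p + 2)).card : ℝ) := by
  rw [Finset.sum_congr rfl (fun w _ => Aval_left_ind p (ζ w)), Finset.sum_boole]

lemma sum_Aval_right (ζ : Fin N → Fin 3) (T : Finset (Fin N)) (p : Fin 3) :
    (∑ w ∈ T, Aval (ζ w) p) = ((T.filter (fun w => ζ w = p + 1)).card : ℝ) := by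
  rw [Finset.sum_congr rfl (fun w _ => Aval_right_ind p (ζ w)), Finset.sum_boole]

lemma wrap_core (C : ℝ) (a b : Fin 3) :
    |(Aval b a - Aval a b) +
      ((C - (if a = b + 2 then (1:ℝ) else 0) - (if b = b + 2 then (1:ℝ) else 0))
        + (C - (if a = a + 1 then (1:ℝ) else 0) - (if b = a + 1 then (1:ℝ) else 0))
        - (C - (if a = a + 2 then (1:ℝ) else 0) - (if b = a + 2 then (1:ℝ) else 0))
        - (C - (if a = b + 1 then (1:ℝ) else 0) - (if b = b + 1 then (1:ℝ) else 0)))| ≤ 1 := by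
  fin_cases a <;> fin_cases b <;> rw [abs_le] <;>
    norm_num [Aval, Fin.ext_iff, Fin.add_def] <;> constructor <;> linarith

lemma Ssum_wrap (hN3 : 3 ≤ N) {ζ : Fin N → Fin 3} (hζ : inOmega ζ) :
    |Ssum (exch ζ (⟨0, by omega⟩ : Fin N) (⟨N - 1, by omega⟩ : Fin N)) - Ssum ζ| ≤ 1 := by
  set u : Fin N := ⟨0, by omega⟩ with hu
  set v : Fin N := ⟨N - 1, by omega⟩ with hv
  have huval : (u : ℕ) = 0 := rfl
  have hvval : (v : ℕ) = N - 1 := rfl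
  have huv : (u : ℕ) < (v : ℕ) := by omega
  have hne : u ≠ v := Fin.ne_of_val_ne (by omega)
  rw [Ssum_swap ζ u v huv]
  have hTf : Finset.univ.filter (fun w : Fin N => (u : ℕ) < (w : ℕ) ∧ (w : ℕ) < (v : ℕ))
      = Finset.univ \ ({u, v} : Finset (Fin N)) := by
    ext w
    have hw := w.isLt
    simp only [Finset.mem_filter, Finset.mem_univ, true_and, Finset.mem_sdiff,
      Finset.mem_insert, Finset.mem_singleton, not_or, Fin.ext_iff, huval, hvval]
    omega
  rw [hTf]
  set T := Finset.univ \ ({u, v} : Finset (Fin N)) with hT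
  have hsplit : (∑ w ∈ T, (Aval (ζ v) (ζ w) + Aval (ζ w) (ζ u) - Aval (ζ u) (ζ w)
        - Aval (ζ w) (ζ v)))
      = (∑ w ∈ T, Aval (ζ v) (ζ w)) + (∑ w ∈ T, Aval (ζ w) (ζ u))
        - (∑ w ∈ T, Aval (ζ u) (ζ w)) - (∑ w ∈ T, Aval (ζ w) (ζ v)) := by
    rw [Finset.sum_sub_distrib, Finset.sum_sub_distrib, Finset.sum_add_distrib]
  rw [hsplit, sum_Aval_left ζ T (ζ v), sum_Aval_left ζ T (ζ u),
    sum_Aval_right ζ T (ζ u), sum_Aval_right ζ T (ζ v)]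
  rw [hT, filter_sdiff_card ζ u v hne, filter_sdiff_card ζ u v hne,
    filter_sdiff_card ζ u v hne, filter_sdiff_card ζ u v hne]
  have hcc : ∀ q : Fin 3, ((Finset.univ.filter (fun w => ζ w = q)).card : ℝ)
      = ((Finset.univ.filter (fun w => ζ w = (0 : Fin 3))).card : ℝ) := by
    intro q
    have h1 := hζ q
    have h2 := hζ (0 : Fin 3)
    have : (Finset.univ.filter (fun w => ζ w = q)).card
        = (Finset.univ.filter (fun w => ζ w = (0 : Fin 3))).card := by omega
    exact_mod_cast congrArg (Nat.cast : ℕ → ℝ) this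
  rw [hcc (ζ v + 2), hcc (ζ u + 1), hcc (ζ u + 2), hcc (ζ v + 1)]
  exact wrap_core _ (ζ u) (ζ v)

end Bounds

section PathDefs

noncomputable def wt (N : ℕ) (β : ℝ) (ζ : Fin N → Fin 3) : ℝ := Real.exp (-(β * N * HN ζ))

lemma wt_pos {N : ℕ} (β : ℝ) (ζ : Fin N → Fin 3) : 0 < wt N β ζ := Real.exp_pos _

lemma wt_step {N : ℕ} (β : ℝ) (hβ : 0 ≤ β) (hN : 0 < N) {ζ ζ' : Fin N → Fin 3}
    (h : |Ssum ζ' - Ssum ζ| ≤ 1) : wt N β ζ ≤ Real.exp (β / N) * wt N β ζ' := by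
  rw [wt, wt, ← Real.exp_add]
  apply Real.exp_le_exp.mpr
  rw [HN_eq, HN_eq]
  have hN' : (0:ℝ) < (N:ℝ) := by exact_mod_cast hN
  have h1 : Ssum ζ' - Ssum ζ ≤ 1 := (abs_le.mp h).2
  have e : ∀ S : ℝ, β * (N:ℝ) * (1 / (N:ℝ) ^ 2 * S) = β / N * S := by
    intro S; field_simp
  rw [e, e]
  have h2 : β / N * (Ssum ζ' - Ssum ζ) ≤ β / N * 1 :=
    mul_le_mul_of_nonneg_left h1 (by positivity)
  rw [mul_sub, mul_one] at h2
  linarith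

def zp (x d k : ℕ) : ℕ := if k < d then x + k else x + (2 * d - 2 - k)

def pcf (d k j : ℕ) : ℕ :=
  if k ≤ d then (if j < k then j + 1 else if j = k then 0 else j)
  else (if j < 2 * d - 1 - k then j + 1 else if j = 2 * d - 1 - k then d
        else if j < d then j else 0)

lemma pcf_zero (d j : ℕ) : pcf d 0 j = j := by unfold pcf; split_ifs <;> omega

lemma pcf_last (d j : ℕ) (hd : 1 ≤ d) (hj : j ≤ d) :
    pcf d (2 * d - 1) j = if j = 0 then d else if j = d then 0 else j := by
  unfold pcf; split_ifs <;> omega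

set_option maxHeartbeats 1000000 in
lemma pcf_step (d k j i : ℕ) (hd : 1 ≤ d) (hk : k < 2 * d - 1) (hj : j ≤ d)
    (hi : i = if k < d then k else 2 * d - 2 - k) :
    pcf d (k + 1) j = if j = i then pcf d k (i + 1) else if j = i + 1 then pcf d k i
      else pcf d k j := by
  rcases Nat.lt_or_ge k d with hkd | hkd
  · rw [if_pos hkd] at hi
    subst hi
    unfold pcf
    split_ifs <;> omega
  · rw [if_neg (Nat.not_lt.mpr hkd)] at hi
    subst hi
    unfold pcf
    split_ifs <;> omega

def pidx (x y : ℕ) {N : ℕ} (w : Fin N) : ℕ :=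
  if (w : ℕ) = y % N then y - x else (w : ℕ) - x

def inPath (x y : ℕ) {N : ℕ} (w : Fin N) : Prop :=
  (x ≤ (w : ℕ) ∧ (w : ℕ) < y) ∨ (w : ℕ) = y % N

noncomputable def pc {N : ℕ} (hN : 0 < N) (x y k : ℕ) (ζ : Fin N → Fin 3) : Fin N → Fin 3 :=
  fun w => if inPath x y w then ζ (site hN (x + pcf (y - x) k (pidx x y w))) else ζ w

noncomputable def pcInv {N : ℕ} (hN : 0 < N) (x y : ℕ) :
    ℕ → (Fin N → Fin 3) → (Fin N → Fin 3)
  | 0 => fun ζ => ζ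
  | (k+1) => fun ζ => pcInv hN x y k
      (exch ζ (site hN (zp x (y - x) k)) (site hN (zp x (y - x) k + 1)))

end PathDefs

section PathLemmas
variable {N x y : ℕ} (hN : 0 < N) (hx : 1 ≤ x) (hxy : x < y) (hy : y ≤ N)

lemma site_val {z : ℕ} (hz : z < N) : ((site hN z : Fin N) : ℕ) = z := Nat.mod_eq_of_lt hz

lemma ymod (hy : y ≤ N) (hN : 0 < N) : (y < N ∧ y % N = y) ∨ (y = N ∧ y % N = 0) := by
  rcases Nat.lt_or_ge y N with h | h
  · exact Or.inl ⟨h, Nat.mod_eq_of_lt h⟩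
  · have hyN : y = N := le_antisymm hy h
    subst hyN
    exact Or.inr ⟨rfl, Nat.mod_self y⟩

include hN hx hxy hy in
lemma inPath_site (j : ℕ) (hj : j ≤ y - x) :
    inPath x y (site hN (x + j)) ∧ pidx x y (site hN (x + j)) = j := by
  have hym := ymod hy hN
  by_cases hjd : x + j = y
  · have hv : ((site hN (x + j) : Fin N) : ℕ) = y % N := by rw [hjd]; rfl
    constructor
    · exact Or.inr hv
    · rw [pidx, if_pos hv]; omega
  · have hlt : x + j < N := by omega
    have hv : ((site hN (x + j) : Fin N) : ℕ) = x + j := site_val hN hlt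
    have hne : ((site hN (x + j) : Fin N) : ℕ) ≠ y % N := by omega
    constructor
    · exact Or.inl (by omega)
    · rw [pidx, if_neg hne]; omega

include hN hx hxy hy in
lemma pidx_le (w : Fin N) (h : inPath x y w) : pidx x y w ≤ y - x := by
  have hym := ymod hy hN
  rcases h with ⟨h1, h2⟩ | h3 <;> (rw [pidx]; split_ifs <;> omega)

include hN hx hxy hy in
lemma site_eq_of (w : Fin N) (h : inPath x y w) : w = site hN (x + pidx x y w) := by
  have hym := ymod hy hN
  have hwlt := w.isLt
  rcases h with ⟨h1, h2⟩ | h3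
  · have hne : (w : ℕ) ≠ y % N := by omega
    rw [pidx, if_neg hne]
    apply Fin.ext
    rw [site_val hN (by omega)]
    omega
  · rw [pidx, if_pos h3]
    apply Fin.ext
    have : x + (y - x) = y := by omega
    rw [this]
    exact h3

include hN hx hxy hy in
lemma pc_step (k : ℕ) (hk : k < 2 * (y - x) - 1) (ζ : Fin N → Fin 3) :
    pc hN x y (k + 1) ζ
      = exch (pc hN x y k ζ) (site hN (zp x (y - x) k)) (site hN (zp x (y - x) k + 1)) := by
  have hd1 : 1 ≤ y - x := by omega
  obtain ⟨i, hi, hzpi, hi1⟩ : ∃ i, i = (if k < y - x then k else 2 * (y - x) - 2 - k) ∧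
      zp x (y - x) k = x + i ∧ i + 1 ≤ y - x := by
    refine ⟨if k < y - x then k else 2 * (y - x) - 2 - k, rfl, ?_, ?_⟩
    · rw [zp]; split_ifs <;> rfl
    · split_ifs <;> omega
  have hpcf : ∀ j, j ≤ y - x → pcf (y - x) (k + 1) j =
      if j = i then pcf (y - x) k (i + 1) else if j = i + 1 then pcf (y - x) k i
        else pcf (y - x) k j := fun j hj => pcf_step (y - x) k j i hd1 hk hj hi
  have hu := inPath_site hN hx hxy hy i (by omega)
  have hv := inPath_site hN hx hxy hy (i + 1) (by omega)
  have hzp1 : zp x (y - x) k + 1 = x + (i + 1) := by omega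
  rw [hzp1, hzpi]
  funext w
  by_cases hw : inPath x y w
  · have hrep := site_eq_of hN hx hxy hy w hw
    have hjd : pidx x y w ≤ y - x := pidx_le hN hx hxy hy w hw
    have huw : w = site hN (x + i) ↔ pidx x y w = i := by
      constructor
      · intro h; rw [h, hu.2]
      · intro h; rw [hrep, h]
    have hvw : w = site hN (x + (i + 1)) ↔ pidx x y w = i + 1 := by
      constructor
      · intro h; rw [h, hv.2]
      · intro h; rw [hrep, h]
    simp only [pc, exch, if_pos hw]
    by_cases h1 : pidx x y w = i
    · rw [if_pos (huw.mpr h1), hpcf _ hjd, if_pos h1]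
      rw [if_pos hv.1, hv.2]
    · by_cases h2 : pidx x y w = i + 1
      · rw [if_neg (fun hh => h1 (huw.mp hh)), if_pos (hvw.mpr h2), hpcf _ hjd,
          if_neg h1, if_pos h2]
        rw [if_pos hu.1, hu.2]
      · rw [if_neg (fun hh => h1 (huw.mp hh)), if_neg (fun hh => h2 (hvw.mp hh)),
          hpcf _ hjd, if_neg h1, if_neg h2]
  · have hwu : w ≠ site hN (x + i) := fun h => hw (h ▸ hu.1)
    have hwv : w ≠ site hN (x + (i + 1)) := fun h => hw (h ▸ hv.1)
    simp only [pc, exch, if_neg hw, if_neg hwu, if_neg hwv]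

include hN hx hxy hy in
lemma pc_zero (ζ : Fin N → Fin 3) : pc hN x y 0 ζ = ζ := by
  funext w
  by_cases hw : inPath x y w
  · simp only [pc, if_pos hw, pcf_zero]
    exact (congrArg ζ (site_eq_of hN hx hxy hy w hw)).symm
  · simp only [pc, if_neg hw]

include hN hx hxy hy in
lemma pc_last (ζ : Fin N → Fin 3) :
    pc hN x y (2 * (y - x) - 1) ζ = exch ζ (site hN x) (site hN y) := by
  have hd1 : 1 ≤ y - x := by omega
  have hu := inPath_site hN hx hxy hy 0 (by omega)
  have hv := inPath_site hN hx hxy hy (y - x) (by omega)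
  have hx0 : x + 0 = x := rfl
  have hxd : x + (y - x) = y := by omega
  rw [hx0] at hu
  rw [hxd] at hv
  funext w
  by_cases hw : inPath x y w
  · have hrep := site_eq_of hN hx hxy hy w hw
    have hjd : pidx x y w ≤ y - x := pidx_le hN hx hxy hy w hw
    have huw : w = site hN x ↔ pidx x y w = 0 := by
      constructor
      · intro h; rw [h, hu.2]
      · intro h; rw [hrep, h, hx0]
    have hvw : w = site hN y ↔ pidx x y w = y - x := by
      constructor
      · intro h; rw [h, hv.2]
      · intro h; rw [hrep, h, hxd]
    simp only [pc, exch, if_pos hw, pcf_last (y - x) _ hd1 hjd]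
    by_cases h1 : pidx x y w = 0
    · rw [if_pos (huw.mpr h1), if_pos h1, hxd]
    · by_cases h2 : pidx x y w = y - x
      · rw [if_neg (fun hh => h1 (huw.mp hh)), if_pos (hvw.mpr h2), if_neg h1,
          if_pos h2, hx0]
      · rw [if_neg (fun hh => h1 (huw.mp hh)), if_neg (fun hh => h2 (hvw.mp hh)),
          if_neg h1, if_neg h2]
        exact (congrArg ζ hrep).symm
  · have hwu : w ≠ site hN x := fun h => hw (h ▸ hu.1)
    have hwv : w ≠ site hN y := fun h => hw (h ▸ hv.1)
    simp only [pc, exch, if_neg hw, if_neg hwu, if_neg hwv]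

include hN hx hxy hy in
lemma pcInv_pc (k : ℕ) (hk : k ≤ 2 * (y - x) - 1) (ζ : Fin N → Fin 3) :
    pcInv hN x y k (pc hN x y k ζ) = ζ := by
  induction k with
  | zero => rw [pc_zero hN hx hxy hy]; rfl
  | succ n ih =>
    rw [pc_step hN hx hxy hy n (by omega)]
    show pcInv hN x y n (exch _ _ _) = ζ
    rw [exch_exch]
    exact ih (by omega)

include hN hx hxy hy in
lemma pc_pcInv (k : ℕ) (hk : k ≤ 2 * (y - x) - 1) (ζ : Fin N → Fin 3) :
    pc hN x y k (pcInv hN x y k ζ) = ζ := by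
  induction k generalizing ζ with
  | zero => exact pc_zero hN hx hxy hy _
  | succ n ih =>
    show pc hN x y (n + 1) (pcInv hN x y n (exch ζ _ _)) = ζ
    rw [pc_step hN hx hxy hy n (by omega), ih (by omega), exch_exch]

include hN hx hxy hy in
lemma pc_mem (k : ℕ) (hk : k ≤ 2 * (y - x) - 1) {ζ : Fin N → Fin 3} (hζ : inOmega ζ) :
    inOmega (pc hN x y k ζ) := by
  induction k with
  | zero => rw [pc_zero hN hx hxy hy]; exact hζ
  | succ n ih =>
    rw [pc_step hN hx hxy hy n (by omega)]
    exact inOmega_exch (ih (by omega)) _ _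

include hN hx hxy hy in
lemma pcInv_mem (k : ℕ) (hk : k ≤ 2 * (y - x) - 1) {ζ : Fin N → Fin 3} (hζ : inOmega ζ) :
    inOmega (pcInv hN x y k ζ) := by
  induction k generalizing ζ with
  | zero => exact hζ
  | succ n ih =>
    show inOmega (pcInv hN x y n (exch ζ _ _))
    exact ih (by omega) (inOmega_exch hζ _ _)

include hN hx hxy hy in
lemma Ssum_step (h3N : 3 ≤ N) {ζ : Fin N → Fin 3} (hζ : inOmega ζ) (z : ℕ)
    (hz1 : 1 ≤ z) (hz2 : z + 1 ≤ N) :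
    |Ssum (exch ζ (site hN z) (site hN (z + 1))) - Ssum ζ| ≤ 1 := by
  rcases Nat.lt_or_ge (z + 1) N with h | h
  · apply Ssum_adj
    rw [site_val hN (by omega), site_val hN (by omega)]
  · have hzN : z + 1 = N := by omega
    have h1 : site hN z = (⟨N - 1, by omega⟩ : Fin N) := by
      apply Fin.ext
      show (site hN z : ℕ) = N - 1
      rw [site_val hN (by omega)]
      omega
    have h2 : site hN (z + 1) = (⟨0, by omega⟩ : Fin N) := by
      apply Fin.ext
      show (z + 1) % N = 0
      rw [hzN]
      exact Nat.mod_self N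
    rw [h1, h2, exch_comm]
    exact Ssum_wrap h3N hζ

include hN hx hxy hy in
lemma wt_pc (β : ℝ) (hβ : 0 ≤ β) (h3N : 3 ≤ N) (k : ℕ) (hk : k ≤ 2 * (y - x) - 1)
    {ζ : Fin N → Fin 3} (hζ : inOmega ζ) :
    wt N β ζ ≤ Real.exp (β * k / N) * wt N β (pc hN x y k ζ) := by
  induction k with
  | zero =>
    rw [pc_zero hN hx hxy hy]
    simp
  | succ n ih =>
    have h1 := ih (by omega)
    have hmem := pc_mem hN hx hxy hy n (by omega) hζ
    have hzr : 1 ≤ zp x (y - x) n ∧ zp x (y - x) n + 1 ≤ N := by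
      rw [zp]; split_ifs <;> omega
    have hstep := Ssum_step hN hx hxy hy h3N hmem (zp x (y - x) n) hzr.1 hzr.2
    have h2 : wt N β (pc hN x y n ζ) ≤ Real.exp (β / N) * wt N β (pc hN x y (n + 1) ζ) := by
      rw [pc_step hN hx hxy hy n (by omega)]
      exact wt_step β hβ hN hstep
    calc wt N β ζ ≤ Real.exp (β * n / N) * wt N β (pc hN x y n ζ) := h1
      _ ≤ Real.exp (β * n / N) * (Real.exp (β / N) * wt N β (pc hN x y (n + 1) ζ)) := by
          apply mul_le_mul_of_nonneg_left h2 (le_of_lt (Real.exp_pos _))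
      _ = Real.exp (β * ((n + 1 : ℕ) : ℝ) / N) * wt N β (pc hN x y (n + 1) ζ) := by
          rw [← mul_assoc, ← Real.exp_add]
          congr 1
          push_cast
          field_simp

end PathLemmas

section Expect
variable {N : ℕ}

lemma mem_OmegaF {ζ : Fin N → Fin 3} : ζ ∈ OmegaF N ↔ inOmega ζ := by
  simp [OmegaF]

lemma Zpart_nonneg (β : ℝ) : 0 ≤ Zpart N β :=
  Finset.sum_nonneg fun ζ _ => (Real.exp_pos _).le

lemma nu_nonneg (β : ℝ) (ζ : Fin N → Fin 3) : 0 ≤ nu N β ζ :=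
  div_nonneg (Real.exp_pos _).le (Zpart_nonneg β)

lemma expect_nonneg (β : ℝ) {h : (Fin N → Fin 3) → ℝ} (hh : ∀ ζ, 0 ≤ h ζ) :
    0 ≤ expect N β h :=
  Finset.sum_nonneg fun ζ _ => mul_nonneg (nu_nonneg β ζ) (hh ζ)

lemma expect_mono (β : ℝ) {h1 h2 : (Fin N → Fin 3) → ℝ} (hle : ∀ ζ, h1 ζ ≤ h2 ζ) :
    expect N β h1 ≤ expect N β h2 :=
  Finset.sum_le_sum fun ζ _ => mul_le_mul_of_nonneg_left (hle ζ) (nu_nonneg β ζ)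

lemma expect_const_mul (β c : ℝ) (h : (Fin N → Fin 3) → ℝ) :
    expect N β (fun ζ => c * h ζ) = c * expect N β h := by
  rw [expect, expect, Finset.mul_sum]
  exact Finset.sum_congr rfl fun ζ _ => by ring

lemma expect_sum (β : ℝ) (s : Finset ℕ) (F : ℕ → (Fin N → Fin 3) → ℝ) :
    expect N β (fun ζ => ∑ k ∈ s, F k ζ) = ∑ k ∈ s, expect N β (F k) := by
  rw [expect]
  simp_rw [Finset.mul_sum]
  rw [Finset.sum_comm]
  exact Finset.sum_congr rfl fun k _ => rfl

lemma nu_eq_wt_div (β : ℝ) (ζ : Fin N → Fin 3) : nu N β ζ = wt N β ζ / Zpart N β := rfl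

set_option maxHeartbeats 1000000 in
lemma expect_comp_le (β : ℝ) (Φ Ψ : (Fin N → Fin 3) → (Fin N → Fin 3))
    (hΦ : ∀ ζ, inOmega ζ → inOmega (Φ ζ))
    (hΨ : ∀ ζ, inOmega ζ → inOmega (Ψ ζ))
    (hl : ∀ ζ, inOmega ζ → Ψ (Φ ζ) = ζ)
    (hr : ∀ ζ, inOmega ζ → Φ (Ψ ζ) = ζ)
    (K : ℝ)
    (hw : ∀ ζ, inOmega ζ → wt N β ζ ≤ K * wt N β (Φ ζ))
    (h : (Fin N → Fin 3) → ℝ) (hh : ∀ ζ, 0 ≤ h ζ) :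
    expect N β (fun ζ => h (Φ ζ)) ≤ K * expect N β h := by
  have hZ := Zpart_nonneg (N := N) β
  rcases eq_or_lt_of_le hZ with hZ0 | hZpos
  · have hnu : ∀ ζ : Fin N → Fin 3, nu N β ζ = 0 := by
      intro ζ
      rw [nu, ← hZ0, div_zero]
    rw [expect, expect]
    simp [hnu]
  · have key : ∑ ζ ∈ OmegaF N, wt N β ζ * h (Φ ζ)
        ≤ K * ∑ ζ ∈ OmegaF N, wt N β ζ * h ζ := by
      calc ∑ ζ ∈ OmegaF N, wt N β ζ * h (Φ ζ)
          ≤ ∑ ζ ∈ OmegaF N, K * wt N β (Φ ζ) * h (Φ ζ) := by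
            apply Finset.sum_le_sum
            intro ζ hζ
            exact mul_le_mul_of_nonneg_right (hw ζ (mem_OmegaF.mp hζ)) (hh _)
        _ = K * ∑ ζ ∈ OmegaF N, wt N β (Φ ζ) * h (Φ ζ) := by
            rw [Finset.mul_sum]
            exact Finset.sum_congr rfl fun ζ _ => by ring
        _ = K * ∑ ξ ∈ OmegaF N, wt N β ξ * h ξ := by
            have hb : (∑ ζ ∈ OmegaF N, wt N β (Φ ζ) * h (Φ ζ))
                = ∑ ξ ∈ OmegaF N, wt N β ξ * h ξ := by
              apply Finset.sum_nbij' Φ Ψ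
              · intro ζ hζ; exact mem_OmegaF.mpr (hΦ ζ (mem_OmegaF.mp hζ))
              · intro ζ hζ; exact mem_OmegaF.mpr (hΨ ζ (mem_OmegaF.mp hζ))
              · intro ζ hζ; exact hl ζ (mem_OmegaF.mp hζ)
              · intro ζ hζ; exact hr ζ (mem_OmegaF.mp hζ)
              · intro ζ hζ; rfl
            rw [hb]
    rw [expect, expect]
    simp_rw [nu_eq_wt_div, div_mul_eq_mul_div]
    rw [← Finset.sum_div, ← Finset.sum_div, ← mul_div_assoc]
    exact (div_le_div_iff_of_pos_right hZpos).mpr key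

lemma mult_bound (a : ℕ → ℝ) (ha : ∀ z, 0 ≤ a z) (x d : ℕ) (hd : 1 ≤ d) :
    ∑ k ∈ Finset.range (2 * d - 1), a (zp x d k)
      ≤ 2 * ∑ z ∈ Finset.Ico x (x + d), a z := by
  have hsplit : ∑ k ∈ Finset.range (2 * d - 1), a (zp x d k)
      = (∑ k ∈ Finset.Ico 0 d, a (zp x d k)) + ∑ k ∈ Finset.Ico d (2 * d - 1), a (zp x d k) := by
    rw [Finset.sum_Ico_consecutive _ (Nat.zero_le d) (by omega), Finset.range_eq_Ico]
  have h1 : (∑ k ∈ Finset.Ico 0 d, a (zp x d k)) = ∑ z ∈ Finset.Ico x (x + d), a z := by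
    apply Finset.sum_nbij' (fun k => x + k) (fun z => z - x)
    · intro k hk; simp only [Finset.mem_Ico] at hk ⊢; omega
    · intro z hz; simp only [Finset.mem_Ico] at hz ⊢; omega
    · intro k hk; omega
    · intro z hz; simp only [Finset.mem_Ico] at hz; omega
    · intro k hk
      simp only [Finset.mem_Ico] at hk
      rw [zp, if_pos (by omega)]
  have h2 : (∑ k ∈ Finset.Ico d (2 * d - 1), a (zp x d k)) ≤ ∑ z ∈ Finset.Ico x (x + d), a z := by
    have him : (∑ k ∈ Finset.Ico d (2 * d - 1), a (zp x d k))
        = ∑ z ∈ (Finset.Ico d (2 * d - 1)).image (fun k => x + (2 * d - 2 - k)), a z := by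
      rw [Finset.sum_image ?inj]
      · apply Finset.sum_congr rfl
        intro k hk
        simp only [Finset.mem_Ico] at hk
        rw [zp, if_neg (by omega)]
      case inj =>
        intro k1 hk1 k2 hk2 he
        simp only [Finset.coe_Ico, Set.mem_Ico, Finset.mem_coe, Finset.mem_Ico] at hk1 hk2 he
        omega
    rw [him]
    apply Finset.sum_le_sum_of_subset_of_nonneg
    · intro z hz
      simp only [Finset.mem_image, Finset.mem_Ico] at hz ⊢
      obtain ⟨k, hk, rfl⟩ := hz
      omega
    · intro z _ _; exact ha z
  have hnn : (0:ℝ) ≤ ∑ z ∈ Finset.Ico x (x + d), a z :=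
    Finset.sum_nonneg fun z _ => ha z
  linarith [hsplit, h1, h2]

end Expect


/-- Path estimate for long exchanges: for `1 ≤ x < y ≤ N`,
`ν((∇_{x,y}f)²) ≤ 2(2(y−x)−1) e^{2β} Σ_{z=x}^{y−1} ν((∇_{z,z+1}f)²)`. -/
theorem path_estimate (β : ℝ) (hβ : 0 ≤ β) (N : ℕ) (hN : 0 < N) (h3 : 3 ∣ N)
    (x y : ℕ) (hx : 1 ≤ x) (hxy : x < y) (hy : y ≤ N)
    (f : (Fin N → Fin 3) → ℝ) :
    expect N β (fun ζ => (grad f (site hN x) (site hN y) ζ) ^ 2)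
      ≤ 2 * (2 * ((y : ℝ) - (x : ℝ)) - 1) * Real.exp (2 * β) *
        ∑ z ∈ Finset.Ico x y,
          expect N β (fun ζ => (grad f (site hN z) (site hN (z + 1)) ζ) ^ 2) := by
  have hN3 : 3 ≤ N := by
    rcases h3 with ⟨c, rfl⟩
    omega
  have hd1 : 1 ≤ y - x := by omega
  have htel : ∀ ζ : Fin N → Fin 3, grad f (site hN x) (site hN y) ζ
      = ∑ k ∈ Finset.range (2 * (y - x) - 1),
          grad f (site hN (zp x (y - x) k)) (site hN (zp x (y - x) k + 1)) (pc hN x y k ζ) := by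
    intro ζ
    have hterm : ∀ k ∈ Finset.range (2 * (y - x) - 1),
        grad f (site hN (zp x (y - x) k)) (site hN (zp x (y - x) k + 1)) (pc hN x y k ζ)
          = f (pc hN x y (k + 1) ζ) - f (pc hN x y k ζ) := by
      intro k hk
      rw [Finset.mem_range] at hk
      rw [grad, ← pc_step hN hx hxy hy k hk]
    rw [Finset.sum_congr rfl hterm, Finset.sum_range_sub (fun k => f (pc hN x y k ζ)),
      pc_last hN hx hxy hy ζ, pc_zero hN hx hxy hy ζ, grad]
  have hCS : ∀ ζ : Fin N → Fin 3, (grad f (site hN x) (site hN y) ζ) ^ 2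
      ≤ ((2 * (y - x) - 1 : ℕ) : ℝ) * ∑ k ∈ Finset.range (2 * (y - x) - 1),
          (grad f (site hN (zp x (y - x) k)) (site hN (zp x (y - x) k + 1))
            (pc hN x y k ζ)) ^ 2 := by
    intro ζ
    rw [htel ζ]
    have hcs := sq_sum_le_card_mul_sum_sq (s := Finset.range (2 * (y - x) - 1))
      (f := fun k => grad f (site hN (zp x (y - x) k)) (site hN (zp x (y - x) k + 1))
        (pc hN x y k ζ))
    rwa [Finset.card_range] at hcs
  have step1 := expect_mono (N := N) β hCS
  have step2 : expect N β (fun ζ => ((2 * (y - x) - 1 : ℕ) : ℝ)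
        * ∑ k ∈ Finset.range (2 * (y - x) - 1),
          (grad f (site hN (zp x (y - x) k)) (site hN (zp x (y - x) k + 1))
            (pc hN x y k ζ)) ^ 2)
      = ((2 * (y - x) - 1 : ℕ) : ℝ) * ∑ k ∈ Finset.range (2 * (y - x) - 1),
          expect N β (fun ζ => (grad f (site hN (zp x (y - x) k))
            (site hN (zp x (y - x) k + 1)) (pc hN x y k ζ)) ^ 2) := by
    rw [expect_const_mul, expect_sum]
  have step3 : ∀ k ∈ Finset.range (2 * (y - x) - 1),
      expect N β (fun ζ => (grad f (site hN (zp x (y - x) k))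
          (site hN (zp x (y - x) k + 1)) (pc hN x y k ζ)) ^ 2)
        ≤ Real.exp (2 * β) * expect N β (fun ζ => (grad f (site hN (zp x (y - x) k))
            (site hN (zp x (y - x) k + 1)) ζ) ^ 2) := by
    intro k hk
    rw [Finset.mem_range] at hk
    have hkle : k ≤ 2 * (y - x) - 1 := le_of_lt hk
    apply expect_comp_le β (pc hN x y k) (pcInv hN x y k)
      (fun ζ hζ => pc_mem hN hx hxy hy k hkle hζ)
      (fun ζ hζ => pcInv_mem hN hx hxy hy k hkle hζ)
      (fun ζ hζ => pcInv_pc hN hx hxy hy k hkle ζ)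
      (fun ζ hζ => pc_pcInv hN hx hxy hy k hkle ζ)
      (Real.exp (2 * β)) ?hw _ (fun ζ => sq_nonneg _)
    case hw =>
      intro ζ hζ
      have h1 := wt_pc hN hx hxy hy β hβ hN3 k hkle hζ
      have h2 : Real.exp (β * k / N) ≤ Real.exp (2 * β) := by
        apply Real.exp_le_exp.mpr
        have hNpos : (0:ℝ) < N := by exact_mod_cast hN
        rw [div_le_iff₀ hNpos]
        have hk2 : (k : ℝ) ≤ 2 * N := by
          have hkk : k ≤ 2 * N := by omega
          exact_mod_cast hkk
        nlinarith
      calc wt N β ζ ≤ Real.exp (β * k / N) * wt N β (pc hN x y k ζ) := h1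
        _ ≤ Real.exp (2 * β) * wt N β (pc hN x y k ζ) :=
            mul_le_mul_of_nonneg_right h2 (wt_pos β _).le
  have step4 : (∑ k ∈ Finset.range (2 * (y - x) - 1),
        expect N β (fun ζ => (grad f (site hN (zp x (y - x) k))
          (site hN (zp x (y - x) k + 1)) ζ) ^ 2))
      ≤ 2 * ∑ z ∈ Finset.Ico x (x + (y - x)),
          expect N β (fun ζ => (grad f (site hN z) (site hN (z + 1)) ζ) ^ 2) := by
    exact mult_bound
      (fun z => expect N β (fun ζ => (grad f (site hN z) (site hN (z + 1)) ζ) ^ 2))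
      (fun z => expect_nonneg β (fun ζ => sq_nonneg _)) x (y - x) hd1
  have hIco : Finset.Ico x (x + (y - x)) = Finset.Ico x y := by
    congr 1
    omega
  rw [hIco] at step4
  have hm : ((2 * (y - x) - 1 : ℕ) : ℝ) = 2 * ((y : ℝ) - (x : ℝ)) - 1 := by
    have h := congrArg (Nat.cast : ℕ → ℝ)
      (show (2 * (y - x) - 1) + 1 + 2 * x = 2 * y by omega)
    push_cast at h
    linarith
  have hc0 : (0:ℝ) ≤ ((2 * (y - x) - 1 : ℕ) : ℝ) := Nat.cast_nonneg _
  calc expect N β (fun ζ => (grad f (site hN x) (site hN y) ζ) ^ 2)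
      ≤ expect N β (fun ζ => ((2 * (y - x) - 1 : ℕ) : ℝ)
          * ∑ k ∈ Finset.range (2 * (y - x) - 1),
            (grad f (site hN (zp x (y - x) k)) (site hN (zp x (y - x) k + 1))
              (pc hN x y k ζ)) ^ 2) := step1
    _ = ((2 * (y - x) - 1 : ℕ) : ℝ) * ∑ k ∈ Finset.range (2 * (y - x) - 1),
          expect N β (fun ζ => (grad f (site hN (zp x (y - x) k))
            (site hN (zp x (y - x) k + 1)) (pc hN x y k ζ)) ^ 2) := step2
    _ ≤ ((2 * (y - x) - 1 : ℕ) : ℝ) * ∑ k ∈ Finset.range (2 * (y - x) - 1),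
          (Real.exp (2 * β) * expect N β (fun ζ => (grad f (site hN (zp x (y - x) k))
            (site hN (zp x (y - x) k + 1)) ζ) ^ 2)) :=
        mul_le_mul_of_nonneg_left (Finset.sum_le_sum step3) hc0
    _ = ((2 * (y - x) - 1 : ℕ) : ℝ) * (Real.exp (2 * β)
          * ∑ k ∈ Finset.range (2 * (y - x) - 1),
            expect N β (fun ζ => (grad f (site hN (zp x (y - x) k))
              (site hN (zp x (y - x) k + 1)) ζ) ^ 2)) := by
        rw [← Finset.mul_sum]
    _ ≤ ((2 * (y - x) - 1 : ℕ) : ℝ) * (Real.exp (2 * β)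
          * (2 * ∑ z ∈ Finset.Ico x y,
            expect N β (fun ζ => (grad f (site hN z) (site hN (z + 1)) ζ) ^ 2))) := by
        apply mul_le_mul_of_nonneg_left _ hc0
        exact mul_le_mul_of_nonneg_left step4 (Real.exp_pos _).le
    _ = 2 * (2 * ((y : ℝ) - (x : ℝ)) - 1) * Real.exp (2 * β) *
          ∑ z ∈ Finset.Ico x y,
            expect N β (fun ζ => (grad f (site hN z) (site hN (z + 1)) ζ) ^ 2) := by
        rw [hm]
        ring


end ABC
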